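/- arXiv:1908.09356 — 2 statements merged into one kernel-verified Lean document; each statement's English description precedes it below -/
import Mathlib

section
/- Let G be a finite simple graph, let e = vw be an edge of G, set N[e] = N[v] ∪ N[w] (union of closed neighborhoods), and let u be a vertex with u ∉ N[e] such that every neighbor of u in G lies in N[e] (i.e., u is an isolated vertex of the induced subgraph G ∖ N[e]). Then the independence complex I(G − e) collapses onto I(G), where G − e is the graph obtained from G by removing the edge e. -/
/-! ## Abstract simplicial complexes, collapses, simple homotopy type -/

/-- `K` is obtained from `L` by removing a free pair `(σ, τ)`:
`σ ⊊ τ`, `|τ| = |σ| + 1`, and `τ` is the unique face of `K` strictly containing `σ`. -/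
def IsElemCollapse {V : Type} [DecidableEq V] (K L : Finset (Finset V)) : Prop :=
  ∃ σ τ : Finset V, σ ∈ K ∧ τ ∈ K ∧ σ ⊂ τ ∧ τ.card = σ.card + 1 ∧
    (∀ ρ ∈ K, σ ⊂ ρ → ρ = τ) ∧ L = K \ {σ, τ}

/-- `K` collapses onto `L` by a finite sequence of elementary collapses. -/
def Collapses {V : Type} [DecidableEq V] (K L : Finset (Finset V)) : Prop :=
  Relation.ReflTransGen (fun A B => IsElemCollapse A B) K L

/-- A finite abstract simplicial complex (with its ambient vertex type). -/
structure AbsCplx : Type 1 where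
  V : Type
  [deceq : DecidableEq V]
  faces : Finset (Finset V)
  empty_mem : ∅ ∈ faces
  down_closed : ∀ σ ∈ faces, ∀ τ ⊆ σ, τ ∈ faces

attribute [instance] AbsCplx.deceq

/-- Isomorphism of abstract simplicial complexes: an injection of the vertices
(the vertices being the elements occurring in faces) carrying faces exactly to faces. -/
def AbsCplx.Iso (K L : AbsCplx) : Prop :=
  ∃ f : K.V → L.V, Set.InjOn f {v | ({v} : Finset K.V) ∈ K.faces} ∧
    L.faces = K.faces.image (Finset.image f)

/-- One step: an isomorphism or an elementary collapse. -/
def AbsCplx.Step (K L : AbsCplx) : Prop :=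
  K.Iso L ∨ ∃ h : K.V = L.V, IsElemCollapse (h ▸ K.faces) L.faces

/-- Same simple homotopy type: finite zigzag of elementary collapses,
elementary expansions, and isomorphisms. -/
def SimpleHtpyEq (K L : AbsCplx) : Prop := Relation.EqvGen AbsCplx.Step K L

/-! ## Join, suspension, spheres, wedges, point -/

/-- Join of two complexes, on the disjoint union of the vertex types. -/
def AbsCplx.join (K L : AbsCplx) : AbsCplx where
  V := K.V ⊕ L.V
  faces := (K.faces ×ˢ L.faces).image fun p => p.1.disjSum p.2
  empty_mem := by
    refine Finset.mem_image.2 ⟨(∅, ∅), Finset.mem_product.2 ⟨K.empty_mem, L.empty_mem⟩, ?_⟩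
    ext x
    cases x <;> simp [Finset.inl_mem_disjSum, Finset.inr_mem_disjSum]
  down_closed := by
    intro σ hσ τ hτ
    rcases Finset.mem_image.1 hσ with ⟨p, hp, rfl⟩
    rcases Finset.mem_product.1 hp with ⟨hp1, hp2⟩
    refine Finset.mem_image.2
      ⟨(p.1.filter (fun v => Sum.inl v ∈ τ), p.2.filter (fun w => Sum.inr w ∈ τ)), ?_, ?_⟩
    · exact Finset.mem_product.2
        ⟨K.down_closed _ hp1 _ (Finset.filter_subset _ _),
         L.down_closed _ hp2 _ (Finset.filter_subset _ _)⟩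
    · ext x
      cases x with
      | inl v =>
        simp only [Finset.inl_mem_disjSum, Finset.mem_filter]
        exact ⟨fun h => h.2, fun h => ⟨Finset.inl_mem_disjSum.1 (hτ h), h⟩⟩
      | inr w =>
        simp only [Finset.inr_mem_disjSum, Finset.mem_filter]
        exact ⟨fun h => h.2, fun h => ⟨Finset.inr_mem_disjSum.1 (hτ h), h⟩⟩

/-- `∂Δ¹`: two vertices, no edge. -/
def sphere0 : AbsCplx where
  V := Bool
  faces := {∅, {false}, {true}}
  empty_mem := by decide
  down_closed := by decide

/-- The one point complex. -/
def ptCplx : AbsCplx where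
  V := Unit
  faces := {∅, {()}}
  empty_mem := by decide
  down_closed := by decide

/-- Suspension `ΣK = K * ∂Δ¹`. -/
def AbsCplx.susp (K : AbsCplx) : AbsCplx := K.join sphere0

/-- Iterated suspension `Σ^m K`. -/
def AbsCplx.nsusp (K : AbsCplx) (m : ℕ) : AbsCplx := AbsCplx.susp^[m] K

/-- `◊ⁿ`, the join of `n+1` copies of `∂Δ¹` (a triangulated `n`-sphere). -/
def diamond : ℕ → AbsCplx
  | 0 => sphere0
  | n + 1 => (diamond n).join sphere0

/-- A chosen base vertex of `◊ⁿ`. -/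
def diamondPt : (n : ℕ) → (diamond n).V
  | 0 => true
  | _ + 1 => Sum.inr true

/-- Wedge of `m` copies of `K`, identifying the chosen vertex `v₀` of each copy
to a single common vertex. -/
def wedge (m : ℕ) (K : AbsCplx) (v₀ : K.V) : AbsCplx where
  V := Option (Fin m × K.V)
  faces := insert ∅ ((Finset.univ (α := Fin m) ×ˢ K.faces).image fun p =>
    p.2.image fun v => if v = v₀ then none else some (p.1, v))
  empty_mem := Finset.mem_insert_self _ _
  down_closed := by
    intro σ hσ τ hτ
    rcases Finset.mem_insert.1 hσ with h | h
    · subst h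
      rw [Finset.subset_empty.1 hτ]
      exact Finset.mem_insert_self _ _
    · rcases Finset.mem_image.1 h with ⟨p, hp, rfl⟩
      rcases Finset.mem_product.1 hp with ⟨-, hp2⟩
      rcases Finset.subset_image_iff.1 hτ with ⟨τ₀, hτ₀, rfl⟩
      exact Finset.mem_insert.2 (Or.inr (Finset.mem_image.2
        ⟨(p.1, τ₀), Finset.mem_product.2 ⟨Finset.mem_univ _, K.down_closed _ hp2 _ hτ₀⟩, rfl⟩))

/-! ## Graphs and independence complexes -/

/-- The closed neighborhood `N[v]`. -/
def closedNbhd {V : Type} (G : SimpleGraph V) (v : V) : Set V := insert v {w | G.Adj v w}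

/-- The graph `G - e` obtained by removing the edge `vw`. -/
def deleteEdge {V : Type} [DecidableEq V] (G : SimpleGraph V) (v w : V) : SimpleGraph V where
  Adj a b := G.Adj a b ∧ s(a, b) ≠ s(v, w)
  symm := ⟨by
    intro a b h
    exact ⟨G.symm.symm _ _ h.1, by rw [Sym2.eq_swap]; exact h.2⟩⟩
  loopless := ⟨fun a h => G.loopless.irrefl a h.1⟩

instance {V : Type} [DecidableEq V] (G : SimpleGraph V) [DecidableRel G.Adj] (v w : V) :
    DecidableRel (deleteEdge G v w).Adj := fun a b =>
  inferInstanceAs (Decidable (G.Adj a b ∧ s(a, b) ≠ s(v, w)))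

/-- Independent finsets of `G` contained in the vertex set `s`
(the faces of the independence complex of the induced subgraph of `G` on `s`). -/
def indepFacesOn {V : Type} [Fintype V] [DecidableEq V] (G : SimpleGraph V)
    [DecidableRel G.Adj] (s : Finset V) : Finset (Finset V) :=
  s.powerset.filter fun t => ∀ a ∈ t, ∀ b ∈ t, ¬ G.Adj a b

/-- The faces of the independence complex `I(G)`. -/
def indepFaces {V : Type} [Fintype V] [DecidableEq V] (G : SimpleGraph V)
    [DecidableRel G.Adj] : Finset (Finset V) :=
  indepFacesOn G Finset.univ

/-- The independence complex `I(G)` as an abstract simplicial complex. -/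
def indepCplx {V : Type} [Fintype V] [DecidableEq V] (G : SimpleGraph V)
    [DecidableRel G.Adj] : AbsCplx where
  V := V
  faces := indepFaces G
  empty_mem := by simp [indepFaces, indepFacesOn]
  down_closed := by
    intro σ hσ τ hτ
    simp only [indepFaces, indepFacesOn, Finset.mem_filter, Finset.mem_powerset] at hσ ⊢
    exact ⟨hτ.trans hσ.1, fun a ha b hb => hσ.2 a (hτ ha) b (hτ hb)⟩

/-- Reduced Euler characteristic of a finite complex given by its set of faces. -/
def redEuler {V : Type} [DecidableEq V] (K : Finset (Finset V)) : ℤ :=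
  ∑ σ ∈ K.filter (fun σ => σ ≠ ∅), (-1 : ℤ) ^ (σ.card - 1)

/-! ## Grid graphs (0-indexed models of the 1-indexed graphs of the paper) -/

/-- The planar grid graph `P_{m,n}`. -/
def gridP (m n : ℕ) : SimpleGraph (Fin m × Fin n) :=
  SimpleGraph.fromRel fun u v =>
    |(u.1 : ℤ) - (v.1 : ℤ)| + |(u.2 : ℤ) - (v.2 : ℤ)| = 1

instance (m n : ℕ) : DecidableRel (gridP m n).Adj := fun a b =>
  decidable_of_iff _ (SimpleGraph.fromRel_adj _ a b).symm

/-- The cylindrical grid graph `C_{m,n}`: columns indexed cyclically. -/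
def gridC (m n : ℕ) : SimpleGraph (Fin m × Fin n) :=
  SimpleGraph.fromRel fun u v =>
    (u.1 = v.1 ∧ (v.2 : ℕ) = ((u.2 : ℕ) + 1) % n) ∨
    ((u.1 : ℕ) + 1 = (v.1 : ℕ) ∧ u.2 = v.2)

instance (m n : ℕ) : DecidableRel (gridC m n).Adj := fun a b =>
  decidable_of_iff _ (SimpleGraph.fromRel_adj _ a b).symm

/-- The Möbius grid graph `M_{m,n}`. -/
def gridM (m n : ℕ) : SimpleGraph (Fin m × Fin n) :=
  SimpleGraph.fromRel fun u v =>
    ((u.1 : ℕ) + 1 = (v.1 : ℕ) ∧ u.2 = v.2) ∨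
    (u.1 = v.1 ∧ (u.2 : ℕ) + 1 = (v.2 : ℕ)) ∨
    ((u.2 : ℕ) = n - 1 ∧ (v.2 : ℕ) = 0 ∧ (u.1 : ℕ) + (v.1 : ℕ) = m - 1)

instance (m n : ℕ) : DecidableRel (gridM m n).Adj := fun a b =>
  decidable_of_iff _ (SimpleGraph.fromRel_adj _ a b).symm

/-- The cylindrical hexagonal grid graph `C^H_{1,n}`: obtained from `C_{2,2n}`
by deleting the vertical edges in the even columns. -/
def gridCH (n : ℕ) : SimpleGraph (Fin 2 × Fin (2 * n)) :=
  SimpleGraph.fromRel fun u v =>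
    (u.1 = v.1 ∧ (v.2 : ℕ) = ((u.2 : ℕ) + 1) % (2 * n)) ∨
    ((u.1 : ℕ) + 1 = (v.1 : ℕ) ∧ u.2 = v.2 ∧ ¬ Even (u.2 : ℕ))

instance (n : ℕ) : DecidableRel (gridCH n).Adj := fun a b =>
  decidable_of_iff _ (SimpleGraph.fromRel_adj _ a b).symm

/-- `M^H_{1,n}`: obtained from `M_{2,2n}` by deleting the vertical edges in the
odd columns (`1`-indexed), i.e. the even columns in this `0`-indexed model. -/
def gridMH (n : ℕ) : SimpleGraph (Fin 2 × Fin (2 * n)) :=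
  SimpleGraph.fromRel fun u v =>
    ((u.1 : ℕ) + 1 = (v.1 : ℕ) ∧ u.2 = v.2 ∧ ¬ Even (u.2 : ℕ)) ∨
    (u.1 = v.1 ∧ (u.2 : ℕ) + 1 = (v.2 : ℕ)) ∨
    ((u.2 : ℕ) = 2 * n - 1 ∧ (v.2 : ℕ) = 0 ∧ (u.1 : ℕ) + (v.1 : ℕ) = 1)

instance (n : ℕ) : DecidableRel (gridMH n).Adj := fun a b =>
  decidable_of_iff _ (SimpleGraph.fromRel_adj _ a b).symm


section CollapseAux

variable {V : Type} [Fintype V] [DecidableEq V]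

lemma mem_indepFaces_iff (G : SimpleGraph V) [DecidableRel G.Adj] {σ : Finset V} :
    σ ∈ indepFaces G ↔ ∀ a ∈ σ, ∀ b ∈ σ, ¬ G.Adj a b := by
  simp [indepFaces, indepFacesOn]

/-- The main induction: collapsing away a pair-closed set `S` of "bad" faces. -/
lemma collapse_union_aux (G : SimpleGraph V) [DecidableRel G.Adj] (v w u : V)
    (hvw : G.Adj v w) (huv : u ≠ v) :
    ∀ n : ℕ, ∀ S : Finset (Finset V), S.card ≤ n →
      (∀ σ ∈ S, v ∈ σ ∧ w ∈ σ) →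
      (∀ ρ : Finset V, u ∉ ρ → (ρ ∈ S ↔ insert u ρ ∈ S)) →
      Collapses (indepFaces G ∪ S) (indepFaces G) := by
  intro n
  induction n with
  | zero =>
    intro S hcard _ _
    have : S = ∅ := Finset.card_eq_zero.1 (Nat.le_zero.1 hcard)
    subst this
    simp only [Finset.union_empty]
    exact Relation.ReflTransGen.refl
  | succ n ih =>
    intro S hcard hSB hpair
    rcases eq_or_ne S ∅ with rfl | hSne
    · simp only [Finset.union_empty]
      exact Relation.ReflTransGen.refl
    -- the set of faces of S not containing u
    set T : Finset (Finset V) := S.filter (fun ρ => u ∉ ρ) with hT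
    have hTne : T.Nonempty := by
      obtain ⟨ρ₀, hρ₀⟩ := Finset.nonempty_iff_ne_empty.2 hSne
      by_cases hu0 : u ∈ ρ₀
      · refine ⟨ρ₀.erase u, Finset.mem_filter.2 ⟨?_, Finset.notMem_erase _ _⟩⟩
        have := (hpair (ρ₀.erase u) (Finset.notMem_erase _ _)).2
        rw [Finset.insert_erase hu0] at this
        exact this hρ₀
      · exact ⟨ρ₀, Finset.mem_filter.2 ⟨hρ₀, hu0⟩⟩
    obtain ⟨σ, hσT, hσmax⟩ := T.exists_max_image Finset.card hTne
    have hσS : σ ∈ S := (Finset.mem_filter.1 hσT).1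
    have huσ : u ∉ σ := (Finset.mem_filter.1 hσT).2
    have hτS : insert u σ ∈ S := (hpair σ huσ).1 hσS
    set τ : Finset V := insert u σ with hτdef
    -- bad faces are not independent in G
    have hbad_not : ∀ ρ ∈ S, ρ ∉ indepFaces G := by
      intro ρ hρ hmem
      obtain ⟨hv, hw⟩ := hSB ρ hρ
      exact (mem_indepFaces_iff G).1 hmem v hv w hw hvw
    -- set S' = S \ {σ, τ}
    set S' : Finset (Finset V) := S \ {σ, τ} with hS'
    have hstep : IsElemCollapse (indepFaces G ∪ S) (indepFaces G ∪ S') := by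
      refine ⟨σ, τ, Finset.mem_union_right _ hσS, Finset.mem_union_right _ hτS,
        Finset.ssubset_insert huσ, Finset.card_insert_of_notMem huσ, ?_, ?_⟩
      · -- uniqueness of τ
        intro ρ hρ hσρ
        rcases Finset.mem_union.1 hρ with hρG | hρS
        · exfalso
          obtain ⟨hv, hw⟩ := hSB σ hσS
          exact (mem_indepFaces_iff G).1 hρG v (hσρ.1 hv) w (hσρ.1 hw) hvw
        · by_cases huρ : u ∈ ρ
          · -- ρ.erase u ∈ T and contains σ
            have hρ' : ρ.erase u ∈ S := by
              have := (hpair (ρ.erase u) (Finset.notMem_erase _ _)).2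
              rw [Finset.insert_erase huρ] at this
              exact this hρS
            have hσρ' : σ ⊆ ρ.erase u := Finset.subset_erase.2 ⟨hσρ.1, huσ⟩
            rcases eq_or_ne σ (ρ.erase u) with heq | hne
            · rw [hτdef, heq, Finset.insert_erase huρ]
            · exfalso
              have hlt : σ.card < (ρ.erase u).card :=
                Finset.card_lt_card (Finset.ssubset_iff_subset_ne.2 ⟨hσρ', hne⟩)
              have := hσmax (ρ.erase u)
                (Finset.mem_filter.2 ⟨hρ', Finset.notMem_erase _ _⟩)
              omega
          · exfalso
            have hlt : σ.card < ρ.card := Finset.card_lt_card hσρ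
            have := hσmax ρ (Finset.mem_filter.2 ⟨hρS, huρ⟩)
            omega
      · -- the complex after removing the pair
        ext ρ
        constructor
        · intro h
          rcases Finset.mem_union.1 h with h1 | h1
          · refine Finset.mem_sdiff.2 ⟨Finset.mem_union_left _ h1, ?_⟩
            intro hmem
            rcases Finset.mem_insert.1 hmem with he | he
            · exact hbad_not _ hσS (he ▸ h1)
            · exact hbad_not _ hτS ((Finset.mem_singleton.1 he) ▸ h1)
          · obtain ⟨h1, h2⟩ := Finset.mem_sdiff.1 h1
            exact Finset.mem_sdiff.2 ⟨Finset.mem_union_right _ h1, h2⟩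
        · intro h
          obtain ⟨h1, h2⟩ := Finset.mem_sdiff.1 h
          rcases Finset.mem_union.1 h1 with h1 | h1
          · exact Finset.mem_union_left _ h1
          · exact Finset.mem_union_right _ (Finset.mem_sdiff.2 ⟨h1, h2⟩)
    refine Relation.ReflTransGen.head hstep (ih S' ?_ ?_ ?_)
    · have hsub : S' ⊆ S.erase σ := by
        intro ρ hρ
        rw [hS'] at hρ
        simp only [Finset.mem_sdiff, Finset.mem_insert, Finset.mem_singleton] at hρ
        exact Finset.mem_erase.2 ⟨fun h => hρ.2 (Or.inl h), hρ.1⟩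
      have := Finset.card_le_card hsub
      have := Finset.card_erase_of_mem hσS
      have hpos : 1 ≤ S.card := Finset.card_pos.2 ⟨σ, hσS⟩
      omega
    · intro ρ hρ
      rw [hS'] at hρ
      exact hSB ρ (Finset.mem_sdiff.1 hρ).1
    · intro ρ hρu
      rw [hS']
      simp only [Finset.mem_sdiff, Finset.mem_insert, Finset.mem_singleton]
      have h1 : ρ ≠ τ := by
        intro h; rw [hτdef] at h; exact hρu (h ▸ Finset.mem_insert_self u σ)
      have h2 : insert u ρ ≠ σ := by
        intro h; exact huσ (h ▸ Finset.mem_insert_self u ρ)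
      have h3 : insert u ρ = τ ↔ ρ = σ := by
        constructor
        · intro h
          have := congrArg (fun s => Finset.erase s u) h
          simpa [Finset.erase_insert hρu, hτdef, Finset.erase_insert huσ] using this
        · rintro rfl; rfl
      constructor
      · rintro ⟨hρ, hne⟩
        refine ⟨(hpair ρ hρu).1 hρ, ?_⟩
        rintro (h | h)
        · exact h2 h
        · exact hne (Or.inl (h3.1 h))
      · rintro ⟨hρ, hne⟩
        refine ⟨(hpair ρ hρu).2 hρ, ?_⟩
        rintro (rfl | h)
        · exact hne (Or.inr (h3.2 rfl))
        · exact h1 h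

end CollapseAux

/-- If `e = vw` is an edge of `G`, `u ∉ N[e] = N[v] ∪ N[w]` and
every neighbor of `u` lies in `N[e]` (so `u` is isolated in `G ∖ N[e]`), then
`I(G − e)` collapses onto `I(G)`. -/
theorem indepFaces_deleteEdge_collapses {V : Type} [Fintype V] [DecidableEq V]
    (G : SimpleGraph V) [DecidableRel G.Adj] (v w u : V)
    (hvw : G.Adj v w)
    (hu : u ∉ closedNbhd G v ∪ closedNbhd G w)
    (hnbr : ∀ x : V, G.Adj u x → x ∈ closedNbhd G v ∪ closedNbhd G w) :
    Collapses (indepFaces (deleteEdge G v w)) (indepFaces G) := by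
  classical
  -- basic facts about u, v, w
  simp only [Set.mem_union, closedNbhd, Set.mem_insert_iff, Set.mem_setOf_eq, not_or] at hu
  obtain ⟨⟨huv, huvadj⟩, huw, huwadj⟩ := hu
  have hGe_le : ∀ a b, (deleteEdge G v w).Adj a b → G.Adj a b := fun a b h => h.1
  -- the bad faces
  set Bad : Finset (Finset V) :=
    (indepFaces (deleteEdge G v w)).filter (fun σ => v ∈ σ ∧ w ∈ σ) with hBad
  have hBadmem : ∀ σ ∈ Bad, v ∈ σ ∧ w ∈ σ := fun σ h => (Finset.mem_filter.1 h).2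
  -- decomposition of I(G-e)
  have hdecomp : indepFaces (deleteEdge G v w) = indepFaces G ∪ Bad := by
    ext σ
    simp only [Finset.mem_union, hBad, Finset.mem_filter]
    constructor
    · intro h
      by_cases hvwσ : v ∈ σ ∧ w ∈ σ
      · exact Or.inr ⟨h, hvwσ⟩
      · refine Or.inl ((mem_indepFaces_iff G).2 fun a ha b hb hab => ?_)
        have hne : ¬ (deleteEdge G v w).Adj a b := (mem_indepFaces_iff _).1 h a ha b hb
        have hs : s(a, b) = s(v, w) := by
          by_contra hss
          exact hne ⟨hab, hss⟩
        rcases Sym2.eq_iff.1 hs with ⟨rfl, rfl⟩ | ⟨rfl, rfl⟩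
        · exact hvwσ ⟨ha, hb⟩
        · exact hvwσ ⟨hb, ha⟩
    · intro h
      rcases h with h | ⟨h, -⟩
      · exact (mem_indepFaces_iff _).2 fun a ha b hb hab =>
          (mem_indepFaces_iff G).1 h a ha b hb (hGe_le a b hab)
      · exact h
  -- Bad is pair-closed under u
  have hBadpair : ∀ ρ : Finset V, u ∉ ρ → (ρ ∈ Bad ↔ insert u ρ ∈ Bad) := by
    intro ρ hρu
    simp only [hBad, Finset.mem_filter]
    constructor
    · rintro ⟨hind, hv, hw⟩
      refine ⟨(mem_indepFaces_iff _).2 ?_, Finset.mem_insert_of_mem hv,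
        Finset.mem_insert_of_mem hw⟩
      -- u is non-adjacent (even in G) to every element of ρ
      have key : ∀ x ∈ ρ, ¬ G.Adj u x := by
        intro x hx hadj
        rcases hnbr x hadj with hxv | hxw
        · rcases hxv with hxv | hxv
          · exact huvadj (hxv ▸ hadj).symm
          · -- G.Adj v x with x ∈ ρ, v ∈ ρ
            have hne : ¬ (deleteEdge G v w).Adj v x := (mem_indepFaces_iff _).1 hind v hv x hx
            have hs : s(v, x) = s(v, w) := by
              by_contra hss
              exact hne ⟨hxv, hss⟩
            rcases Sym2.eq_iff.1 hs with ⟨-, hxw2⟩ | ⟨hvw2, -⟩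
            · exact huwadj (hxw2 ▸ hadj).symm
            · exact G.loopless.irrefl w (hvw2 ▸ hvw)
        · rcases hxw with hxw | hxw
          · exact huwadj (hxw ▸ hadj).symm
          · have hne : ¬ (deleteEdge G v w).Adj w x := (mem_indepFaces_iff _).1 hind w hw x hx
            have hs : s(w, x) = s(v, w) := by
              by_contra hss
              exact hne ⟨hxw, hss⟩
            rcases Sym2.eq_iff.1 hs with ⟨hwv2, -⟩ | ⟨-, hxv2⟩
            · exact G.loopless.irrefl v (hwv2 ▸ hvw)
            · exact huvadj (hxv2 ▸ hadj).symm
      intro a ha b hb hab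
      rcases Finset.mem_insert.1 ha with ha' | ha' <;>
        rcases Finset.mem_insert.1 hb with hb' | hb'
      · exact (deleteEdge G v w).loopless.irrefl u (by rw [ha', hb'] at hab; exact hab)
      · exact key b hb' (hGe_le _ _ (ha' ▸ hab))
      · exact key a ha' (hGe_le _ _ (hb' ▸ hab)).symm
      · exact (mem_indepFaces_iff _).1 hind a ha' b hb' hab
    · rintro ⟨hind, hv, hw⟩
      refine ⟨(mem_indepFaces_iff _).2 fun a ha b hb =>
        (mem_indepFaces_iff _).1 hind a (Finset.mem_insert_of_mem ha)
          b (Finset.mem_insert_of_mem hb), ?_, ?_⟩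
      · rcases Finset.mem_insert.1 hv with h | h
        · exact absurd h.symm huv
        · exact h
      · rcases Finset.mem_insert.1 hw with h | h
        · exact absurd h.symm huw
        · exact h
  rw [hdecomp]
  exact collapse_union_aux G v w u hvw huv Bad.card Bad le_rfl hBadmem hBadpair
end

section
/- Let G be a finite simple graph with an edge uv, and let H be the graph obtained from G by replacing the edge uv with a path of length four through three new vertices: V(H) = V(G) ⊔ {x, y, z} and E(H) = (E(G) ∖ {uv}) ∪ {ux, xy, yz, zv}. Then I(H) and Σ I(G) have the same simple homotopy type. -/
/-- The graph `H` obtained from `G` by replacing the edge `uv` with a path of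
length four `u - x - y - z - v` through three new vertices `x = inr 0`,
`y = inr 1`, `z = inr 2`. -/
def pathReplace {V : Type} (G : SimpleGraph V) (u v : V) : SimpleGraph (V ⊕ Fin 3) :=
  SimpleGraph.fromRel fun a b =>
    (∃ p q : V, a = Sum.inl p ∧ b = Sum.inl q ∧ G.Adj p q ∧ s(p, q) ≠ s(u, v)) ∨
    (a = Sum.inl u ∧ b = Sum.inr 0) ∨
    (a = Sum.inr 0 ∧ b = Sum.inr 1) ∨
    (a = Sum.inr 1 ∧ b = Sum.inr 2) ∨
    (a = Sum.inr 2 ∧ b = Sum.inl v)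

instance {V : Type} [Fintype V] [DecidableEq V] (G : SimpleGraph V) [DecidableRel G.Adj]
    (u v : V) : DecidableRel (pathReplace G u v).Adj := fun a b =>
  decidable_of_iff _ (SimpleGraph.fromRel_adj _ a b).symm

/-! ### Auxiliary general lemmas -/

section AuxGeneral

variable {W : Type} [DecidableEq W]

lemma collapses_subset' {K L : Finset (Finset W)} (h : Collapses K L) : L ⊆ K := by
  induction h with
  | refl => exact Finset.Subset.refl _
  | tail _ h ih =>
    obtain ⟨σ, τ, _, _, _, _, _, rfl⟩ := h
    exact Finset.Subset.trans Finset.sdiff_subset ih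

lemma IsElemCollapse.down_closed' {K L : Finset (Finset W)} (h : IsElemCollapse K L)
    (hK : ∀ σ ∈ K, ∀ τ ⊆ σ, τ ∈ K) : ∀ σ ∈ L, ∀ τ ⊆ σ, τ ∈ L := by
  obtain ⟨σ₀, τ₀, hσ₀, hτ₀, hss, hcard, huniq, rfl⟩ := h
  intro ρ hρ π hπ
  rw [Finset.mem_sdiff] at hρ ⊢
  obtain ⟨hρK, hρn⟩ := hρ
  refine ⟨hK ρ hρK π hπ, ?_⟩
  intro hmem
  rcases Finset.mem_insert.1 hmem with h1 | h1
  · subst h1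
    have hne : ρ ≠ π := by
      intro he; exact hρn (by simp [he])
    have : π ⊂ ρ := Finset.ssubset_iff_subset_ne.2 ⟨hπ, Ne.symm hne⟩
    exact hρn (by simp [huniq ρ hρK this])
  · rw [Finset.mem_singleton] at h1
    subst h1
    have : σ₀ ⊂ ρ := ssubset_of_ssubset_of_subset hss hπ
    exact hρn (by simp [huniq ρ hρK this])

lemma collapses_down_closed {K L : Finset (Finset W)} (h : Collapses K L)
    (hK : ∀ σ ∈ K, ∀ τ ⊆ σ, τ ∈ K) : ∀ σ ∈ L, ∀ τ ⊆ σ, τ ∈ L := by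
  induction h with
  | refl => exact hK
  | tail _ h ih => exact h.down_closed' ih

/-- Package a finset of faces as an `AbsCplx`. -/
def cplxOf (F : Finset (Finset W)) (he : ∅ ∈ F)
    (hd : ∀ σ ∈ F, ∀ τ ⊆ σ, τ ∈ F) : AbsCplx :=
  { V := W, faces := F, empty_mem := he, down_closed := hd }

lemma shtpy_of_collapses {F₂ : Finset (Finset W)} (he₂ : ∅ ∈ F₂)
    (hd₂ : ∀ σ ∈ F₂, ∀ τ ⊆ σ, τ ∈ F₂) :
    ∀ {F₁ : Finset (Finset W)} (h : Collapses F₁ F₂)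
      (he₁ : ∅ ∈ F₁) (hd₁ : ∀ σ ∈ F₁, ∀ τ ⊆ σ, τ ∈ F₁),
      SimpleHtpyEq (cplxOf F₁ he₁ hd₁) (cplxOf F₂ he₂ hd₂) := by
  intro F₁ h
  induction h using Relation.ReflTransGen.head_induction_on with
  | refl => intro _ _; exact Relation.EqvGen.refl _
  | head h' hrest ih =>
    intro he₁ hd₁
    rename_i A B
    have hdB : ∀ σ ∈ B, ∀ τ ⊆ σ, τ ∈ B := h'.down_closed' hd₁
    have heB : ∅ ∈ B := collapses_subset' hrest he₂
    refine Relation.EqvGen.trans _ _ _ ?_ (ih heB hdB)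
    exact Relation.EqvGen.rel _ _ (Or.inr ⟨rfl, h'⟩)

/-- Lemma A: removing an up-closed, `p`-toggle-closed family of faces is a collapse. -/
lemma collapses_toggle (p : W) (n : ℕ) :
    ∀ (D K : Finset (Finset W)), D.card ≤ n → D ⊆ K →
    (∀ S ∈ D, ∀ ρ ∈ K, S ⊆ ρ → ρ ∈ D) →
    (∀ S ∈ D, p ∉ S → insert p S ∈ D) →
    (∀ S ∈ D, p ∈ S → S.erase p ∈ D) →
    Collapses K (K \ D) := by
  induction n with
  | zero =>
    intro D K hc _ _ _ _
    have : D = ∅ := Finset.card_eq_zero.1 (Nat.le_zero.1 hc)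
    subst this
    rw [Finset.sdiff_empty]
    exact Relation.ReflTransGen.refl
  | succ n ih =>
    intro D K hcard hDK hup hins hers
    rcases eq_or_ne D ∅ with rfl | hne
    · rw [Finset.sdiff_empty]
      exact Relation.ReflTransGen.refl
    · -- pick a maximal p-free member of D
      have hD0 : (D.filter (fun S => p ∉ S)).Nonempty := by
        obtain ⟨S₀, hS₀⟩ := Finset.nonempty_iff_ne_empty.2 hne
        by_cases hp : p ∈ S₀
        · exact ⟨S₀.erase p, Finset.mem_filter.2 ⟨hers S₀ hS₀ hp, Finset.notMem_erase _ _⟩⟩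
        · exact ⟨S₀, Finset.mem_filter.2 ⟨hS₀, hp⟩⟩
      obtain ⟨S, hSmem, hSmax⟩ := Finset.exists_max_image _ Finset.card hD0
      rw [Finset.mem_filter] at hSmem
      obtain ⟨hSD, hpS⟩ := hSmem
      set T := insert p S with hT
      have hTD : T ∈ D := hins S hSD hpS
      have hstep : IsElemCollapse K (K \ {S, T}) := by
        refine ⟨S, T, hDK hSD, hDK hTD, Finset.ssubset_insert hpS,
          Finset.card_insert_of_notMem hpS, ?_, rfl⟩
        intro ρ hρK hρss
        have hρD : ρ ∈ D := hup S hSD ρ hρK hρss.subset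
        by_cases hpρ : p ∈ ρ
        · by_cases heq : ρ.erase p = S
          · rw [hT, ← heq, Finset.insert_erase hpρ]
          · exfalso
            have h1 : ρ.erase p ∈ D := hers ρ hρD hpρ
            have h2 : S ⊆ ρ.erase p := Finset.subset_erase.2 ⟨hρss.subset, hpS⟩
            have h3 : S ⊂ ρ.erase p := HasSubset.Subset.ssubset_of_ne h2 (fun he => heq he.symm)
            have := hSmax _ (Finset.mem_filter.2 ⟨h1, Finset.notMem_erase _ _⟩)
            exact absurd (Finset.card_lt_card h3) (not_lt.2 this)
        · exfalso
          have := hSmax _ (Finset.mem_filter.2 ⟨hρD, hpρ⟩)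
          exact absurd (Finset.card_lt_card hρss) (not_lt.2 this)
      have hsub : D \ {S, T} ⊆ D.erase S := by
        intro a ha
        rw [Finset.mem_sdiff] at ha
        refine Finset.mem_erase.2 ⟨?_, ha.1⟩
        intro he; exact ha.2 (by simp [he])
      have hcard' : (D \ {S, T}).card ≤ n := by
        calc (D \ {S, T}).card ≤ (D.erase S).card := Finset.card_le_card hsub
        _ = D.card - 1 := Finset.card_erase_of_mem hSD
        _ ≤ n := by omega
      have hTS : T ≠ S := by
        intro he; exact hpS (he ▸ Finset.mem_insert_self p S)
      have hrec : Collapses (K \ {S, T}) ((K \ {S, T}) \ (D \ {S, T})) := by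
        refine ih (D \ {S, T}) (K \ {S, T}) hcard'
          (Finset.sdiff_subset_sdiff hDK (le_refl _)) ?_ ?_ ?_
        · intro S' hS' ρ hρ hsub'
          rw [Finset.mem_sdiff] at hS' hρ ⊢
          exact ⟨hup S' hS'.1 ρ hρ.1 hsub', hρ.2⟩
        · intro S' hS' hpS'
          rw [Finset.mem_sdiff] at hS' ⊢
          refine ⟨hins S' hS'.1 hpS', ?_⟩
          intro hmem
          rcases Finset.mem_insert.1 hmem with h1 | h1
          · exact hpS (h1 ▸ Finset.mem_insert_self p S')
          · rw [Finset.mem_singleton] at h1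
            have : S' = S := by
              have := congrArg (Finset.erase · p) h1
              simpa [hT, Finset.erase_insert hpS', Finset.erase_insert hpS] using this
            exact hS'.2 (by simp [this])
        · intro S' hS' hpS'
          rw [Finset.mem_sdiff] at hS' ⊢
          refine ⟨hers S' hS'.1 hpS', ?_⟩
          intro hmem
          rcases Finset.mem_insert.1 hmem with h1 | h1
          · have : S' = T := by
              rw [hT, ← h1, Finset.insert_erase hpS']
            exact hS'.2 (by simp [this])
          · rw [Finset.mem_singleton] at h1
            exact (hT ▸ h1 ▸ Finset.notMem_erase p S') (Finset.mem_insert_self p S)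
      have hfin : (K \ {S, T}) \ (D \ {S, T}) = K \ D := by
        ext a
        simp only [Finset.mem_sdiff, Finset.mem_insert, Finset.mem_singleton]
        constructor
        · rintro ⟨⟨haK, han⟩, hnd⟩
          refine ⟨haK, fun haD => hnd ⟨haD, han⟩⟩
        · rintro ⟨haK, haD⟩
          exact ⟨⟨haK, fun h => haD (by rcases h with rfl | rfl; exacts [hSD, hTD])⟩,
            fun h => haD h.1⟩
      rw [hfin] at hrec
      exact Relation.ReflTransGen.head hstep hrec

end AuxGeneral
section Concrete

variable {V : Type} [Fintype V] [DecidableEq V] (G : SimpleGraph V) [DecidableRel G.Adj]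
  (u v : V)

/-- Faces of `I(G + uv)` together with the path constraints (after restoring edge `uv`). -/
def F1 : Finset (Finset (V ⊕ Fin 3)) := Finset.univ.powerset.filter fun S =>
  (∀ p q : V, Sum.inl p ∈ S → Sum.inl q ∈ S → ¬ G.Adj p q) ∧
  ¬(Sum.inl u ∈ S ∧ Sum.inr 0 ∈ S) ∧
  ¬(Sum.inr (0 : Fin 3) ∈ S ∧ Sum.inr 1 ∈ S) ∧
  ¬(Sum.inr (1 : Fin 3) ∈ S ∧ Sum.inr 2 ∈ S) ∧
  ¬(Sum.inr (2 : Fin 3) ∈ S ∧ Sum.inl v ∈ S)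

/-- Same but with the edge `u - x` deleted. -/
def F2 : Finset (Finset (V ⊕ Fin 3)) := Finset.univ.powerset.filter fun S =>
  (∀ p q : V, Sum.inl p ∈ S → Sum.inl q ∈ S → ¬ G.Adj p q) ∧
  ¬(Sum.inr (0 : Fin 3) ∈ S ∧ Sum.inr 1 ∈ S) ∧
  ¬(Sum.inr (1 : Fin 3) ∈ S ∧ Sum.inr 2 ∈ S) ∧
  ¬(Sum.inr (2 : Fin 3) ∈ S ∧ Sum.inl v ∈ S)

/-- Same but with the edge `z - v` deleted too: `I(G ⊔ P₃)`. -/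
def F3 : Finset (Finset (V ⊕ Fin 3)) := Finset.univ.powerset.filter fun S =>
  (∀ p q : V, Sum.inl p ∈ S → Sum.inl q ∈ S → ¬ G.Adj p q) ∧
  ¬(Sum.inr (0 : Fin 3) ∈ S ∧ Sum.inr 1 ∈ S) ∧
  ¬(Sum.inr (1 : Fin 3) ∈ S ∧ Sum.inr 2 ∈ S)

/-- `I(G ⊔ K₂)` with `K₂` on `{x, y}`, vertex `z` deleted. -/
def F4 : Finset (Finset (V ⊕ Fin 3)) := Finset.univ.powerset.filter fun S =>
  (∀ p q : V, Sum.inl p ∈ S → Sum.inl q ∈ S → ¬ G.Adj p q) ∧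
  ¬(Sum.inr (0 : Fin 3) ∈ S ∧ Sum.inr 1 ∈ S) ∧
  (Sum.inr (2 : Fin 3) ∉ S)

variable {G u v}

lemma mem_F1 {S : Finset (V ⊕ Fin 3)} : S ∈ F1 G u v ↔
    (∀ p q : V, Sum.inl p ∈ S → Sum.inl q ∈ S → ¬ G.Adj p q) ∧
    ¬(Sum.inl u ∈ S ∧ Sum.inr 0 ∈ S) ∧
    ¬(Sum.inr (0 : Fin 3) ∈ S ∧ Sum.inr 1 ∈ S) ∧
    ¬(Sum.inr (1 : Fin 3) ∈ S ∧ Sum.inr 2 ∈ S) ∧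
    ¬(Sum.inr (2 : Fin 3) ∈ S ∧ Sum.inl v ∈ S) := by
  simp [F1]

lemma mem_F2 {S : Finset (V ⊕ Fin 3)} : S ∈ F2 G v ↔
    (∀ p q : V, Sum.inl p ∈ S → Sum.inl q ∈ S → ¬ G.Adj p q) ∧
    ¬(Sum.inr (0 : Fin 3) ∈ S ∧ Sum.inr 1 ∈ S) ∧
    ¬(Sum.inr (1 : Fin 3) ∈ S ∧ Sum.inr 2 ∈ S) ∧
    ¬(Sum.inr (2 : Fin 3) ∈ S ∧ Sum.inl v ∈ S) := by
  simp [F2]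

lemma mem_F3 {S : Finset (V ⊕ Fin 3)} : S ∈ F3 G ↔
    (∀ p q : V, Sum.inl p ∈ S → Sum.inl q ∈ S → ¬ G.Adj p q) ∧
    ¬(Sum.inr (0 : Fin 3) ∈ S ∧ Sum.inr 1 ∈ S) ∧
    ¬(Sum.inr (1 : Fin 3) ∈ S ∧ Sum.inr 2 ∈ S) := by
  simp [F3]

lemma mem_F4 {S : Finset (V ⊕ Fin 3)} : S ∈ F4 G ↔
    (∀ p q : V, Sum.inl p ∈ S → Sum.inl q ∈ S → ¬ G.Adj p q) ∧
    ¬(Sum.inr (0 : Fin 3) ∈ S ∧ Sum.inr 1 ∈ S) ∧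
    (Sum.inr (2 : Fin 3) ∉ S) := by
  simp [F4]

/-- Membership in the faces of `I(H)`. -/
lemma mem_F0 {S : Finset (V ⊕ Fin 3)} : S ∈ indepFaces (pathReplace G u v) ↔
    (∀ p q : V, Sum.inl p ∈ S → Sum.inl q ∈ S → ¬(G.Adj p q ∧ s(p, q) ≠ s(u, v))) ∧
    ¬(Sum.inl u ∈ S ∧ Sum.inr 0 ∈ S) ∧
    ¬(Sum.inr (0 : Fin 3) ∈ S ∧ Sum.inr 1 ∈ S) ∧
    ¬(Sum.inr (1 : Fin 3) ∈ S ∧ Sum.inr 2 ∈ S) ∧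
    ¬(Sum.inr (2 : Fin 3) ∈ S ∧ Sum.inl v ∈ S) := by
  simp only [indepFaces, indepFacesOn, Finset.mem_filter, Finset.mem_powerset,
    Finset.subset_univ, true_and]
  constructor
  · intro h
    refine ⟨?_, ?_, ?_, ?_, ?_⟩
    · rintro p q hp hq ⟨hadj, hne⟩
      exact h _ hp _ hq ((SimpleGraph.fromRel_adj _ _ _).2
        ⟨by simpa using hadj.ne, Or.inl (Or.inl ⟨p, q, rfl, rfl, hadj, hne⟩)⟩)
    · rintro ⟨h1, h2⟩
      exact h _ h1 _ h2 ((SimpleGraph.fromRel_adj _ _ _).2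
        ⟨by simp, Or.inl (Or.inr (Or.inl ⟨rfl, rfl⟩))⟩)
    · rintro ⟨h1, h2⟩
      exact h _ h1 _ h2 ((SimpleGraph.fromRel_adj _ _ _).2
        ⟨by simp, Or.inl (Or.inr (Or.inr (Or.inl ⟨rfl, rfl⟩)))⟩)
    · rintro ⟨h1, h2⟩
      exact h _ h1 _ h2 ((SimpleGraph.fromRel_adj _ _ _).2
        ⟨by simp, Or.inl (Or.inr (Or.inr (Or.inr (Or.inl ⟨rfl, rfl⟩))))⟩)
    · rintro ⟨h1, h2⟩
      exact h _ h1 _ h2 ((SimpleGraph.fromRel_adj _ _ _).2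
        ⟨by simp, Or.inl (Or.inr (Or.inr (Or.inr (Or.inr ⟨rfl, rfl⟩))))⟩)
  · rintro ⟨hG, hux, hxy, hyz, hzv⟩ a ha b hb hadj
    obtain ⟨hne, hR | hR⟩ := (SimpleGraph.fromRel_adj _ a b).1 hadj <;>
    · rcases hR with ⟨p, q, rfl, rfl, h1, h2⟩ | ⟨rfl, rfl⟩ | ⟨rfl, rfl⟩ | ⟨rfl, rfl⟩ | ⟨rfl, rfl⟩
      · first
        | exact hG p q ha hb ⟨h1, h2⟩
        | exact hG p q hb ha ⟨h1, h2⟩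
      · first | exact hux ⟨ha, hb⟩ | exact hux ⟨hb, ha⟩
      · first | exact hxy ⟨ha, hb⟩ | exact hxy ⟨hb, ha⟩
      · first | exact hyz ⟨ha, hb⟩ | exact hyz ⟨hb, ha⟩
      · first | exact hzv ⟨ha, hb⟩ | exact hzv ⟨hb, ha⟩

lemma empty_F1 : ∅ ∈ F1 G u v := by simp [F1]
lemma empty_F2 : ∅ ∈ F2 G v := by simp [F2]
lemma empty_F3 : ∅ ∈ F3 G := by simp [F3]
lemma empty_F4 : ∅ ∈ F4 G := by simp [F4]

lemma down_F1 : ∀ σ ∈ F1 G u v, ∀ τ ⊆ σ, τ ∈ F1 G u v := by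
  intro σ hσ τ hτ
  rw [mem_F1] at hσ ⊢
  obtain ⟨h1, h2, h3, h4, h5⟩ := hσ
  exact ⟨fun p q hp hq => h1 p q (hτ hp) (hτ hq),
    fun ⟨a, b⟩ => h2 ⟨hτ a, hτ b⟩, fun ⟨a, b⟩ => h3 ⟨hτ a, hτ b⟩,
    fun ⟨a, b⟩ => h4 ⟨hτ a, hτ b⟩, fun ⟨a, b⟩ => h5 ⟨hτ a, hτ b⟩⟩

lemma down_F2 : ∀ σ ∈ F2 G v, ∀ τ ⊆ σ, τ ∈ F2 G v := by
  intro σ hσ τ hτ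
  rw [mem_F2] at hσ ⊢
  obtain ⟨h1, h3, h4, h5⟩ := hσ
  exact ⟨fun p q hp hq => h1 p q (hτ hp) (hτ hq),
    fun ⟨a, b⟩ => h3 ⟨hτ a, hτ b⟩, fun ⟨a, b⟩ => h4 ⟨hτ a, hτ b⟩,
    fun ⟨a, b⟩ => h5 ⟨hτ a, hτ b⟩⟩

lemma down_F3 : ∀ σ ∈ F3 G, ∀ τ ⊆ σ, τ ∈ F3 G := by
  intro σ hσ τ hτ
  rw [mem_F3] at hσ ⊢
  obtain ⟨h1, h3, h4⟩ := hσ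
  exact ⟨fun p q hp hq => h1 p q (hτ hp) (hτ hq),
    fun ⟨a, b⟩ => h3 ⟨hτ a, hτ b⟩, fun ⟨a, b⟩ => h4 ⟨hτ a, hτ b⟩⟩

lemma down_F4 : ∀ σ ∈ F4 G, ∀ τ ⊆ σ, τ ∈ F4 G := by
  intro σ hσ τ hτ
  rw [mem_F4] at hσ ⊢
  obtain ⟨h1, h3, h4⟩ := hσ
  exact ⟨fun p q hp hq => h1 p q (hτ hp) (hτ hq),
    fun ⟨a, b⟩ => h3 ⟨hτ a, hτ b⟩, fun h => h4 (hτ h)⟩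

end Concrete
section Rounds

variable {V : Type} [Fintype V] [DecidableEq V] {G : SimpleGraph V} [DecidableRel G.Adj]
  {u v : V}

lemma collapse01 (huv : G.Adj u v) :
    Collapses (indepFaces (pathReplace G u v)) (F1 G u v) := by
  classical
  set F0 := indepFaces (pathReplace G u v) with hF0
  set D := F0.filter (fun S => Sum.inl u ∈ S ∧ Sum.inl v ∈ S) with hD
  have hup : ∀ S ∈ D, ∀ ρ ∈ F0, S ⊆ ρ → ρ ∈ D := by
    intro S hS ρ hρ hsub
    rw [hD, Finset.mem_filter] at hS ⊢
    exact ⟨hρ, hsub hS.2.1, hsub hS.2.2⟩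
  have hins : ∀ S ∈ D, Sum.inr 1 ∉ S → insert (Sum.inr 1) S ∈ D := by
    intro S hS hyS
    rw [hD, Finset.mem_filter] at hS ⊢
    obtain ⟨hS0, hu, hv⟩ := hS
    rw [hF0, mem_F0] at hS0
    obtain ⟨h1, h2, h3, h4, h5⟩ := hS0
    have hx : Sum.inr (0 : Fin 3) ∉ S := fun h => h2 ⟨hu, h⟩
    have hz : Sum.inr (2 : Fin 3) ∉ S := fun h => h5 ⟨h, hv⟩
    refine ⟨?_, by simp [hu], by simp [hv]⟩
    rw [hF0, mem_F0]
    refine ⟨?_, ?_, ?_, ?_, ?_⟩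
    · intro p q hp hq
      exact h1 p q (by simpa using hp) (by simpa using hq)
    · rintro ⟨a, b⟩; exact h2 ⟨by simpa using a, by simpa using b⟩
    · rintro ⟨a, b⟩; exact absurd (by simpa using a) hx
    · rintro ⟨a, b⟩; exact absurd (by simpa using b) hz
    · rintro ⟨a, b⟩; exact h5 ⟨by simpa using a, by simpa using b⟩
  have hers : ∀ S ∈ D, Sum.inr 1 ∈ S → S.erase (Sum.inr 1) ∈ D := by
    intro S hS hyS
    rw [hD, Finset.mem_filter] at hS ⊢
    obtain ⟨hS0, hu, hv⟩ := hS
    refine ⟨(indepCplx (pathReplace G u v)).down_closed S hS0 _ (Finset.erase_subset _ _),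
      Finset.mem_erase.2 ⟨by simp, hu⟩, Finset.mem_erase.2 ⟨by simp, hv⟩⟩
  have key := collapses_toggle (Sum.inr 1) D.card D F0 le_rfl (Finset.filter_subset _ _)
    hup hins hers
  have heq : F0 \ D = F1 G u v := by
    ext S
    rw [Finset.mem_sdiff, hD, Finset.mem_filter, mem_F1]
    constructor
    · rintro ⟨hS0, hn⟩
      have hnboth : ¬(Sum.inl u ∈ S ∧ Sum.inl v ∈ S) := fun hb => hn ⟨hS0, hb⟩
      rw [hF0, mem_F0] at hS0
      obtain ⟨h1, h2, h3, h4, h5⟩ := hS0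
      refine ⟨?_, h2, h3, h4, h5⟩
      intro p q hp hq hadj
      by_cases he : s(p, q) = s(u, v)
      · rw [Sym2.eq_iff] at he
        rcases he with ⟨rfl, rfl⟩ | ⟨rfl, rfl⟩
        · exact hnboth ⟨hp, hq⟩
        · exact hnboth ⟨hq, hp⟩
      · exact h1 p q hp hq ⟨hadj, he⟩
    · rintro ⟨h1, h2, h3, h4, h5⟩
      have hS0 : S ∈ F0 := by
        rw [hF0, mem_F0]
        exact ⟨fun p q hp hq h => h1 p q hp hq h.1, h2, h3, h4, h5⟩
      exact ⟨hS0, fun h => h1 u v h.2.1 h.2.2 huv⟩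
  rwa [heq] at key

lemma collapse21 (huv : G.Adj u v) :
    Collapses (F2 G v) (F1 G u v) := by
  classical
  set D := (F2 G v).filter (fun S => Sum.inl u ∈ S ∧ Sum.inr 0 ∈ S) with hD
  have hup : ∀ S ∈ D, ∀ ρ ∈ F2 G v, S ⊆ ρ → ρ ∈ D := by
    intro S hS ρ hρ hsub
    rw [hD, Finset.mem_filter] at hS ⊢
    exact ⟨hρ, hsub hS.2.1, hsub hS.2.2⟩
  have hins : ∀ S ∈ D, Sum.inr 2 ∉ S → insert (Sum.inr 2) S ∈ D := by
    intro S hS hzS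
    rw [hD, Finset.mem_filter] at hS ⊢
    obtain ⟨hS0, hu, hx⟩ := hS
    rw [mem_F2] at hS0
    obtain ⟨h1, h3, h4, h5⟩ := hS0
    have hy : Sum.inr (1 : Fin 3) ∉ S := fun h => h3 ⟨hx, h⟩
    have hv' : Sum.inl v ∉ S := fun h => h1 u v hu h huv
    refine ⟨?_, by simp [hu], by simp [hx]⟩
    rw [mem_F2]
    refine ⟨?_, ?_, ?_, ?_⟩
    · intro p q hp hq
      exact h1 p q (by simpa using hp) (by simpa using hq)
    · rintro ⟨a, b⟩; exact h3 ⟨by simpa using a, by simpa using b⟩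
    · rintro ⟨a, b⟩; exact absurd (by simpa using a) hy
    · rintro ⟨a, b⟩; exact absurd (by simpa using b) hv'
  have hers : ∀ S ∈ D, Sum.inr 2 ∈ S → S.erase (Sum.inr 2) ∈ D := by
    intro S hS hzS
    rw [hD, Finset.mem_filter] at hS ⊢
    obtain ⟨hS0, hu, hx⟩ := hS
    exact ⟨down_F2 S hS0 _ (Finset.erase_subset _ _),
      Finset.mem_erase.2 ⟨by simp, hu⟩, Finset.mem_erase.2 ⟨by simp, hx⟩⟩
  have key := collapses_toggle (Sum.inr 2) D.card D (F2 G v) le_rfl (Finset.filter_subset _ _)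
    hup hins hers
  have heq : F2 G v \ D = F1 G u v := by
    ext S
    rw [Finset.mem_sdiff, hD, Finset.mem_filter, mem_F1, mem_F2]
    constructor
    · rintro ⟨⟨h1, h3, h4, h5⟩, hn⟩
      exact ⟨h1, fun hb => hn ⟨⟨h1, h3, h4, h5⟩, hb⟩, h3, h4, h5⟩
    · rintro ⟨h1, h2, h3, h4, h5⟩
      exact ⟨⟨h1, h3, h4, h5⟩, fun hb => h2 hb.2⟩
  rwa [heq] at key

lemma collapse32 : Collapses (F3 G) (F2 G v) := by
  classical
  set D := (F3 G).filter (fun S => Sum.inr 2 ∈ S ∧ Sum.inl v ∈ S) with hD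
  have hup : ∀ S ∈ D, ∀ ρ ∈ F3 G, S ⊆ ρ → ρ ∈ D := by
    intro S hS ρ hρ hsub
    rw [hD, Finset.mem_filter] at hS ⊢
    exact ⟨hρ, hsub hS.2.1, hsub hS.2.2⟩
  have hins : ∀ S ∈ D, Sum.inr 0 ∉ S → insert (Sum.inr 0) S ∈ D := by
    intro S hS hxS
    rw [hD, Finset.mem_filter] at hS ⊢
    obtain ⟨hS0, hz, hv'⟩ := hS
    rw [mem_F3] at hS0
    obtain ⟨h1, h3, h4⟩ := hS0
    have hy : Sum.inr (1 : Fin 3) ∉ S := fun h => h4 ⟨h, hz⟩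
    refine ⟨?_, by simp [hz], by simp [hv']⟩
    rw [mem_F3]
    refine ⟨?_, ?_, ?_⟩
    · intro p q hp hq
      exact h1 p q (by simpa using hp) (by simpa using hq)
    · rintro ⟨a, b⟩; exact absurd (by simpa using b) hy
    · rintro ⟨a, b⟩; exact h4 ⟨by simpa using a, by simpa using b⟩
  have hers : ∀ S ∈ D, Sum.inr 0 ∈ S → S.erase (Sum.inr 0) ∈ D := by
    intro S hS hxS
    rw [hD, Finset.mem_filter] at hS ⊢
    obtain ⟨hS0, hz, hv'⟩ := hS
    exact ⟨down_F3 S hS0 _ (Finset.erase_subset _ _),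
      Finset.mem_erase.2 ⟨by simp, hz⟩, Finset.mem_erase.2 ⟨by simp, hv'⟩⟩
  have key := collapses_toggle (Sum.inr 0) D.card D (F3 G) le_rfl (Finset.filter_subset _ _)
    hup hins hers
  have heq : F3 G \ D = F2 G v := by
    ext S
    rw [Finset.mem_sdiff, hD, Finset.mem_filter, mem_F2, mem_F3]
    constructor
    · rintro ⟨⟨h1, h3, h4⟩, hn⟩
      exact ⟨h1, h3, h4, fun hb => hn ⟨⟨h1, h3, h4⟩, hb⟩⟩
    · rintro ⟨h1, h3, h4, h5⟩
      exact ⟨⟨h1, h3, h4⟩, fun hb => h5 hb.2⟩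
  rwa [heq] at key

lemma collapse34 : Collapses (F3 G) (F4 G) := by
  classical
  set D := (F3 G).filter (fun S => Sum.inr 2 ∈ S) with hD
  have hup : ∀ S ∈ D, ∀ ρ ∈ F3 G, S ⊆ ρ → ρ ∈ D := by
    intro S hS ρ hρ hsub
    rw [hD, Finset.mem_filter] at hS ⊢
    exact ⟨hρ, hsub hS.2⟩
  have hins : ∀ S ∈ D, Sum.inr 0 ∉ S → insert (Sum.inr 0) S ∈ D := by
    intro S hS hxS
    rw [hD, Finset.mem_filter] at hS ⊢
    obtain ⟨hS0, hz⟩ := hS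
    rw [mem_F3] at hS0
    obtain ⟨h1, h3, h4⟩ := hS0
    have hy : Sum.inr (1 : Fin 3) ∉ S := fun h => h4 ⟨h, hz⟩
    refine ⟨?_, by simp [hz]⟩
    rw [mem_F3]
    refine ⟨?_, ?_, ?_⟩
    · intro p q hp hq
      exact h1 p q (by simpa using hp) (by simpa using hq)
    · rintro ⟨a, b⟩; exact absurd (by simpa using b) hy
    · rintro ⟨a, b⟩; exact h4 ⟨by simpa using a, by simpa using b⟩
  have hers : ∀ S ∈ D, Sum.inr 0 ∈ S → S.erase (Sum.inr 0) ∈ D := by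
    intro S hS hxS
    rw [hD, Finset.mem_filter] at hS ⊢
    obtain ⟨hS0, hz⟩ := hS
    exact ⟨down_F3 S hS0 _ (Finset.erase_subset _ _), Finset.mem_erase.2 ⟨by simp, hz⟩⟩
  have key := collapses_toggle (Sum.inr 0) D.card D (F3 G) le_rfl (Finset.filter_subset _ _)
    hup hins hers
  have heq : F3 G \ D = F4 G := by
    ext S
    rw [Finset.mem_sdiff, hD, Finset.mem_filter, mem_F4, mem_F3]
    constructor
    · rintro ⟨⟨h1, h3, h4⟩, hn⟩
      exact ⟨h1, h3, fun hb => hn ⟨⟨h1, h3, h4⟩, hb⟩⟩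
    · rintro ⟨h1, h3, h4⟩
      exact ⟨⟨h1, h3, fun hb => h4 hb.2⟩, fun hb => h4 hb.2⟩
  rwa [heq] at key

end Rounds
section Final

/-- The Boolean suspension coordinates sent into `Fin 3`. -/
def gB : Bool → Fin 3 := fun b => if b then 1 else 0

lemma gB_inj : Function.Injective gB := by decide

variable {V : Type} [Fintype V] [DecidableEq V] {G : SimpleGraph V} [DecidableRel G.Adj]
  {u v : V}

omit [Fintype V] in
lemma mem_image_gB' : True := trivial

lemma mem_indepFaces' {S : Finset V} :
    S ∈ indepFaces G ↔ ∀ a ∈ S, ∀ b ∈ S, ¬ G.Adj a b := by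
  simp [indepFaces, indepFacesOn]

omit [Fintype V] in
lemma mem_image_gB {σ : Finset V} {T : Finset Bool} {w : V ⊕ Fin 3} :
    w ∈ (σ.disjSum T).image (Sum.map id gB) ↔
      (∃ a ∈ σ, w = Sum.inl a) ∨ (∃ b ∈ T, w = Sum.inr (gB b)) := by
  rw [Finset.mem_image]
  constructor
  · rintro ⟨c, hc, rfl⟩
    cases c with
    | inl a =>
      rw [Finset.inl_mem_disjSum] at hc
      exact Or.inl ⟨a, hc, rfl⟩
    | inr b =>
      rw [Finset.inr_mem_disjSum] at hc
      exact Or.inr ⟨b, hc, rfl⟩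
  · rintro (⟨a, ha, rfl⟩ | ⟨b, hb, rfl⟩)
    · exact ⟨Sum.inl a, Finset.inl_mem_disjSum.2 ha, rfl⟩
    · exact ⟨Sum.inr b, Finset.inr_mem_disjSum.2 hb, rfl⟩

lemma iso_final :
    AbsCplx.Iso ((indepCplx G).susp) (cplxOf (F4 G) empty_F4 (down_F4)) := by
  classical
  refine ⟨Sum.map id gB, ?_, ?_⟩
  · have hinj : Function.Injective (Sum.map (id : V → V) gB) := by
      rintro (a | a) (b | b) h <;> simp [Sum.map] at h
      · exact congrArg _ h
      · exact congrArg _ (gB_inj h)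
    exact hinj.injOn
  · show (F4 G) = _
    have hfaces : ((indepCplx G).susp).faces =
        ((indepFaces G : Finset (Finset V)) ×ˢ ({∅, {false}, {true}} : Finset (Finset Bool))).image
          (fun p => p.1.disjSum p.2) := rfl
    rw [hfaces]
    show F4 G = Finset.image (Finset.image (Sum.map (id : V → V) gB))
      (Finset.image (fun p : Finset V × Finset Bool => p.1.disjSum p.2) _)
    rw [Finset.image_image]
    ext S
    simp only [Finset.mem_image, Finset.mem_product, Function.comp, Prod.exists]
    constructor
    · intro hS
      rw [mem_F4] at hS
      obtain ⟨h1, h3, hz⟩ := hS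
      refine ⟨S.toLeft, (Finset.univ.filter (fun b : Bool => Sum.inr (gB b) ∈ S) : Finset Bool),
        ⟨?_, ?_⟩, ?_⟩
      · rw [mem_indepFaces']
        intro a ha b hb
        exact h1 a b (Finset.mem_toLeft.1 ha) (Finset.mem_toLeft.1 hb)
      · by_cases hx : Sum.inr (0 : Fin 3) ∈ S <;> by_cases hy : Sum.inr (1 : Fin 3) ∈ S
        · exact absurd ⟨hx, hy⟩ h3
        · have he : Finset.univ.filter (fun b : Bool => Sum.inr (gB b) ∈ S) = {false} := by
            ext b; simp only [Finset.mem_filter, Finset.mem_univ, true_and]; cases b <;> simp [gB, hx, hy]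
          rw [he]; simp
        · have he : Finset.univ.filter (fun b : Bool => Sum.inr (gB b) ∈ S) = {true} := by
            ext b; simp only [Finset.mem_filter, Finset.mem_univ, true_and]; cases b <;> simp [gB, hx, hy]
          rw [he]; simp
        · have he : Finset.univ.filter (fun b : Bool => Sum.inr (gB b) ∈ S) = ∅ := by
            ext b; simp only [Finset.mem_filter, Finset.mem_univ, true_and]; cases b <;> simp [gB, hx, hy]
          rw [he]; simp
      · ext w
        rw [mem_image_gB]
        constructor
        · rintro (⟨a, ha, rfl⟩ | ⟨b, hb, rfl⟩)
          · exact Finset.mem_toLeft.1 ha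
          · exact (Finset.mem_filter.1 hb).2
        · intro hw
          cases w with
          | inl a => exact Or.inl ⟨a, Finset.mem_toLeft.2 hw, rfl⟩
          | inr j =>
            refine Or.inr ?_
            fin_cases j
            · exact ⟨false, Finset.mem_filter.2 ⟨Finset.mem_univ _, by simpa [gB] using hw⟩,
                by simp [gB]⟩
            · exact ⟨true, Finset.mem_filter.2 ⟨Finset.mem_univ _, by simpa [gB] using hw⟩,
                by simp [gB]⟩
            · exact absurd hw hz
    · rintro ⟨σ, T, ⟨hσ, hT⟩, rfl⟩
      rw [mem_F4]
      rw [mem_indepFaces'] at hσ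
      refine ⟨?_, ?_, ?_⟩
      · intro p q hp hq
        rw [mem_image_gB] at hp hq
        have hp' : p ∈ σ := by
          rcases hp with ⟨a, ha, he⟩ | ⟨b, _, he⟩
          · obtain rfl : p = a := by simpa using he
            exact ha
          · exact absurd he (by simp)
        have hq' : q ∈ σ := by
          rcases hq with ⟨a, ha, he⟩ | ⟨b, _, he⟩
          · obtain rfl : q = a := by simpa using he
            exact ha
          · exact absurd he (by simp)
        exact hσ p hp' q hq'
      · rintro ⟨ha, hb⟩
        rw [mem_image_gB] at ha hb
        have hfT : false ∈ T := by
          rcases ha with ⟨a, _, he⟩ | ⟨b, hbT, he⟩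
          · exact absurd he (by simp)
          · cases b
            · exact hbT
            · simp [gB] at he
        have htT : true ∈ T := by
          rcases hb with ⟨a, _, he⟩ | ⟨b, hbT, he⟩
          · exact absurd he (by simp)
          · cases b
            · simp [gB] at he
            · exact hbT
        simp only [Finset.mem_insert, Finset.mem_singleton] at hT
        rcases hT with rfl | rfl | rfl <;> simp_all
      · intro hmem
        rw [mem_image_gB] at hmem
        rcases hmem with ⟨a, _, he⟩ | ⟨b, _, he⟩
        · exact absurd he (by simp)
        · cases b <;> simp [gB] at he

end Final
/-- Theorem 1.1. If `H` is obtained from `G` by replacing an edge `uv`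
with a length four path `u - x - y - z - v`, then `I(H) ≃ˢ Σ I(G)`. -/
theorem pathReplace_simpleHtpyEq_susp {V : Type} [Fintype V] [DecidableEq V]
    (G : SimpleGraph V) [DecidableRel G.Adj] (u v : V) (huv : G.Adj u v) :
    SimpleHtpyEq (indepCplx (pathReplace G u v)) ((indepCplx G).susp) := by
  classical
  refine Relation.EqvGen.trans _ _ _
    (shtpy_of_collapses empty_F1 down_F1 (collapse01 huv)
      (indepCplx (pathReplace G u v)).empty_mem (indepCplx (pathReplace G u v)).down_closed) ?_
  refine Relation.EqvGen.trans _ _ _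
    (Relation.EqvGen.symm _ _
      (shtpy_of_collapses empty_F1 down_F1 (collapse21 huv) empty_F2 down_F2)) ?_
  refine Relation.EqvGen.trans _ _ _
    (Relation.EqvGen.symm _ _
      (shtpy_of_collapses empty_F2 down_F2 collapse32 empty_F3 down_F3)) ?_
  refine Relation.EqvGen.trans _ _ _
    (shtpy_of_collapses empty_F4 down_F4 collapse34 empty_F3 down_F3) ?_
  exact Relation.EqvGen.symm _ _ (Relation.EqvGen.rel _ _ (Or.inl iso_final))
end
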